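/- Let G be a finite group, R a commutative ring, and M an R[G]-module. Suppose there exists a central element σ of G and a unit λ of R with λ - 1 invertible in R, such that σ acts on M as multiplication by λ. Then the group cohomology H^1(G, M) vanishes. -/

import Mathlib

/-- "Center kills" vanishing of `H¹`: if a central element `σ` of a finite group `G`
acts on an `R[G]`-module `M` as multiplication by a unit `λ` with `λ - 1` invertible,
then `H¹(G, M) = 0`. -/
theorem H1_eq_zero_of_central_unit {R : Type} [CommRing R] {G : Type} [Group G] [Fintype G]
    (M : Rep R G) (σ : G) (hσ : σ ∈ Subgroup.center G) (lam : Rˣ)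
    (hlam : IsUnit ((lam : R) - 1))
    (hact : ∀ m : M, (M.ρ σ) m = (lam : R) • m) :
    Subsingleton (groupCohomology.H1 M) := by
  have mem_iff : ∀ φ : G → M, φ ∈ groupCohomology.coboundaries₁ M ↔
      ∃ x : M, ∀ g, M.ρ g x - x = φ g := by
    intro φ
    simp only [groupCohomology.coboundaries₁, LinearMap.mem_range, funext_iff,
      groupCohomology.d₀₁_hom_apply]
  refine ⟨fun a b => ?_⟩
  suffices hz : ∀ x : groupCohomology.H1 M, x = 0 by rw [hz a, hz b]
  intro x
  induction x using groupCohomology.H1_induction_on with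
  | h x => ?_
  obtain ⟨f, hf⟩ := x
  rw [groupCohomology.H1π_eq_zero_iff, mem_iff]
  obtain ⟨u, hu⟩ := hlam
  refine ⟨u.inv • f σ, fun g => ?_⟩
  have hcoc := (groupCohomology.mem_cocycles₁_iff f).1 hf
  have h1 : f (g * σ) = M.ρ g (f σ) + f g := hcoc g σ
  have h2 : f (σ * g) = (lam : R) • f g + f σ := by rw [hcoc σ g, hact]
  have hcomm : g * σ = σ * g := (Subgroup.mem_center_iff.1 hσ) g  
  have key : ((lam : R) - 1) • f g = M.ρ g (f σ) - f σ := by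
    rw [sub_smul, one_smul]
    rw [hcomm, h2] at h1
    linear_combination (norm := module) h1
  have : M.ρ g (u.inv • f σ) = u.inv • M.ρ g (f σ) := map_smul _ _ _
  rw [this, ← smul_sub, ← key, ← hu, smul_smul, Units.inv_eq_val_inv, u.inv_mul, one_smul]; rfl
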